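/- arXiv:1706.09087 — 3 statements merged into one kernel-verified Lean document; each statement's English description precedes it below -/
import Mathlib

section
/- Let n, m, s, k be positive integers with s ≤ n and k ≤ m, let A ∈ ℂ^{m×n}, and set Θ = [A, I_m] ∈ ℂ^{m×(n+m)}. Let T = {(x,z) : x ∈ ℂⁿ, z ∈ ℂᵐ, ‖x‖₂² + ‖z‖₂² = 1, ‖x‖₀ ≤ s, ‖z‖₀ ≤ k} and D_{s,n} = {x ∈ ℂⁿ : ‖x‖₂ ≤ 1, ‖x‖₀ ≤ s}. Then the (s,k)-restricted isometry constant of Θ satisfies δ_{s,k}(Θ) ≤ sup_{x ∈ D_{s,n}} | ‖A x‖₂² − ‖x‖₂² | + 2 · sup_{(x,z) ∈ T} |⟨A x, z⟩|, where ⟨·,·⟩ is the Hermitian inner product on ℂᵐ. -/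
set_option maxHeartbeats 1000000


open MeasureTheory ProbabilityTheory Matrix Finset

/-- The ℓ₂ norm of a complex vector. -/
noncomputable def l2norm {n : ℕ} (x : Fin n → ℂ) : ℝ := Real.sqrt (∑ i, ‖x i‖ ^ 2)

/-- The ℓ₁ norm of a complex vector. -/
noncomputable def l1norm {n : ℕ} (x : Fin n → ℂ) : ℝ := ∑ i, ‖x i‖

/-- A vector is `s`-sparse if it has at most `s` nonzero entries. -/
def Sparse {n : ℕ} (s : ℕ) (x : Fin n → ℂ) : Prop :=
  (Finset.univ.filter fun i => x i ≠ 0).card ≤ s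

/-- Best `s`-term approximation error in ℓ₁. -/
noncomputable def sigma1 {n : ℕ} (s : ℕ) (x : Fin n → ℂ) : ℝ :=
  sInf {t : ℝ | ∃ x' : Fin n → ℂ, Sparse s x' ∧ t = l1norm (x - x')}

/-- The coherence of a matrix: the largest absolute value of an entry. -/
noncomputable def coh {a b : ℕ} (M : Matrix (Fin a) (Fin b) ℂ) : ℝ :=
  sSup {r : ℝ | ∃ i j, r = ‖M i j‖}

/-- Horizontal concatenation of two matrices. -/
def hcat {m n p : ℕ} (A : Matrix (Fin m) (Fin n) ℂ) (H : Matrix (Fin m) (Fin p) ℂ) :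
    Matrix (Fin m) (Fin (n + p)) ℂ :=
  Matrix.of fun i j => Fin.addCases (fun j₁ => A i j₁) (fun j₂ => H i j₂) j

/-- The (s,k)-restricted isometry constant of Θ ∈ ℂ^{m×(n+p)}. -/
noncomputable def RIPconst (m n p s k : ℕ) (Θ : Matrix (Fin m) (Fin (n + p)) ℂ) : ℝ :=
  sInf {δ : ℝ | 0 ≤ δ ∧ ∀ (x : Fin n → ℂ) (z : Fin p → ℂ), Sparse s x → Sparse k z →
    (1 - δ) * (l2norm x ^ 2 + l2norm z ^ 2) ≤ l2norm (Θ.mulVec (Fin.append x z)) ^ 2 ∧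
    l2norm (Θ.mulVec (Fin.append x z)) ^ 2 ≤ (1 + δ) * (l2norm x ^ 2 + l2norm z ^ 2)}

/-- splitting of the (s,k)-RIP constant of Θ = [A, I] into a standard RIP
term plus twice the supremum of the cross inner-product term (equation (9)). -/
lemma l2sq {N : ℕ} (x : Fin N → ℂ) : l2norm x ^ 2 = ∑ i, ‖x i‖ ^ 2 :=
  Real.sq_sqrt (by positivity)

lemma sparse_smul {N s : ℕ} (c : ℂ) {x : Fin N → ℂ} (h : Sparse s x) :
    Sparse s (c • x) := by
  refine le_trans (Finset.card_le_card ?_) h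
  intro i hi
  simp only [Finset.mem_filter, Finset.mem_univ, true_and, Pi.smul_apply, smul_eq_mul] at *
  exact fun h0 => hi (by simp [h0])

lemma hcat_mulVec {m n : ℕ} (A : Matrix (Fin m) (Fin n) ℂ)
    (x : Fin n → ℂ) (z : Fin m → ℂ) (i : Fin m) :
    (hcat A 1).mulVec (Fin.append x z) i = A.mulVec x i + z i := by
  simp only [hcat, Matrix.mulVec, dotProduct, Matrix.of_apply, Fin.sum_univ_add,
    Fin.addCases_left, Fin.addCases_right, Fin.append_left, Fin.append_right]
  congr 1
  simp [Matrix.one_apply]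

lemma norm_add_sq_c (a b : ℂ) :
    ‖a + b‖^2 = ‖a‖^2 + ‖b‖^2 + 2 * ((starRingEnd ℂ a) * b).re := by
  have := norm_add_sq (𝕜 := ℂ) a b
  simp only [RCLike.re_to_complex, RCLike.inner_apply] at this
  rw [mul_comm b] at this
  linarith

lemma entry_le_one {N : ℕ} {x : Fin N → ℂ} (h : ∑ i, ‖x i‖^2 ≤ 1) (j : Fin N) :
    ‖x j‖ ≤ 1 := by
  have h1 : ‖x j‖^2 ≤ 1 := le_trans (Finset.single_le_sum (f := fun i => ‖x i‖^2)
    (fun i _ => by positivity) (Finset.mem_univ j)) h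
  nlinarith [norm_nonneg (x j)]

lemma mulVec_entry_bound {m n : ℕ} (A : Matrix (Fin m) (Fin n) ℂ) {x : Fin n → ℂ}
    (h : ∑ i, ‖x i‖^2 ≤ 1) (i : Fin m) : ‖A.mulVec x i‖ ≤ ∑ j, ‖A i j‖ := by
  simp only [Matrix.mulVec, dotProduct]
  refine le_trans (norm_sum_le _ _) (Finset.sum_le_sum fun j _ => ?_)
  rw [norm_mul]
  exact mul_le_of_le_one_right (norm_nonneg _) (entry_le_one h j)

lemma mulVec_sq_bound {m n : ℕ} (A : Matrix (Fin m) (Fin n) ℂ) {x : Fin n → ℂ}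
    (h : ∑ i, ‖x i‖^2 ≤ 1) :
    ∑ i, ‖A.mulVec x i‖^2 ≤ ∑ i, (∑ j, ‖A i j‖)^2 :=
  Finset.sum_le_sum fun i _ => by
    have := mulVec_entry_bound A h i
    nlinarith [norm_nonneg (A.mulVec x i)]

theorem stmt_7 (n m s k : ℕ) (hn : 0 < n) (hm : 0 < m)
    (hs : 0 < s) (hsn : s ≤ n) (hk : 0 < k) (hkm : k ≤ m)
    (A : Matrix (Fin m) (Fin n) ℂ) :
    RIPconst m n m s k (hcat A 1) ≤
      sSup {t : ℝ | ∃ x : Fin n → ℂ, l2norm x ≤ 1 ∧ Sparse s x ∧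
          t = |l2norm (A.mulVec x) ^ 2 - l2norm x ^ 2|} +
        2 * sSup {t : ℝ | ∃ (x : Fin n → ℂ) (z : Fin m → ℂ),
          l2norm x ^ 2 + l2norm z ^ 2 = 1 ∧ Sparse s x ∧ Sparse k z ∧
          t = ‖∑ i, star (A.mulVec x i) * z i‖} := by
  set B : ℝ := ∑ i, (∑ j, ‖A i j‖)^2 with hB
  have hB0 : 0 ≤ B := Finset.sum_nonneg fun i _ => by positivity
  set S1 : Set ℝ := {t : ℝ | ∃ x : Fin n → ℂ, l2norm x ≤ 1 ∧ Sparse s x ∧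
          t = |l2norm (A.mulVec x) ^ 2 - l2norm x ^ 2|} with hS1
  set S2 : Set ℝ := {t : ℝ | ∃ (x : Fin n → ℂ) (z : Fin m → ℂ),
          l2norm x ^ 2 + l2norm z ^ 2 = 1 ∧ Sparse s x ∧ Sparse k z ∧
          t = ‖∑ i, star (A.mulVec x i) * z i‖} with hS2
  -- boundedness
  have bdd1 : BddAbove S1 := by
    refine ⟨B + 1, fun t ht => ?_⟩
    obtain ⟨x, hx1, -, rfl⟩ := ht
    have hxs : ∑ i, ‖x i‖^2 ≤ 1 := by
      have h1 := l2sq x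
      have h0 : 0 ≤ l2norm x := Real.sqrt_nonneg _
      nlinarith
    have h1 : l2norm (A.mulVec x) ^ 2 ≤ B := by
      rw [l2sq]; exact mulVec_sq_bound A hxs
    have h2 : l2norm x ^ 2 ≤ 1 := by rw [l2sq]; exact hxs
    have h3 : 0 ≤ l2norm (A.mulVec x) ^ 2 := sq_nonneg _
    have h4 : 0 ≤ l2norm x ^ 2 := sq_nonneg _
    rw [abs_le]; constructor <;> nlinarith
  have bdd2 : BddAbove S2 := by
    refine ⟨(B + 1) / 2, fun t ht => ?_⟩
    obtain ⟨x, z, h1, -, -, rfl⟩ := ht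
    have hxs : ∑ i, ‖x i‖^2 ≤ 1 := by
      have := l2sq x; have := l2sq z
      nlinarith [sq_nonneg (l2norm z)]
    have hzs : ∑ i, ‖z i‖^2 ≤ 1 := by
      have := l2sq x; have := l2sq z
      nlinarith [sq_nonneg (l2norm x)]
    have hAx : ∑ i, ‖A.mulVec x i‖^2 ≤ B := mulVec_sq_bound A hxs
    calc ‖∑ i, star (A.mulVec x i) * z i‖ ≤ ∑ i, ‖star (A.mulVec x i) * z i‖ :=
          norm_sum_le _ _
      _ ≤ ∑ i, (‖A.mulVec x i‖^2 + ‖z i‖^2) / 2 := by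
          refine Finset.sum_le_sum fun i _ => ?_
          rw [norm_mul, norm_star]
          nlinarith [sq_nonneg (‖A.mulVec x i‖ - ‖z i‖)]
      _ = ((∑ i, ‖A.mulVec x i‖^2) + ∑ i, ‖z i‖^2) / 2 := by
          rw [← Finset.sum_add_distrib, ← Finset.sum_div]
      _ ≤ (B + 1) / 2 := by linarith
  -- nonemptiness / nonnegativity of sups
  have mem1 : (0 : ℝ) ∈ S1 := by
    refine ⟨0, ?_, ?_, ?_⟩
    · simp [l2norm]
    · simp [Sparse]
    · simp [l2norm, Matrix.mulVec, dotProduct]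
  have mem2 : (0 : ℝ) ∈ S2 := by
    set e : Fin m → ℂ := fun i => if i = ⟨0, hm⟩ then 1 else 0 with he
    refine ⟨0, e, ?_, ?_, ?_, ?_⟩
    · rw [l2sq, l2sq]
      have h2 : ∑ i : Fin m, ‖e i‖^2 = 1 := by
        rw [Finset.sum_eq_single (⟨0,hm⟩ : Fin m)]
        · simp [he]
        · intro b _ hb; simp [he, hb]
        · intro h; exact absurd (Finset.mem_univ _) h
      rw [h2]; simp
    · simp [Sparse]
    · refine le_trans ?_ hk
      have hsub : (Finset.univ.filter fun i => e i ≠ 0)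
          ⊆ ({⟨0, hm⟩} : Finset (Fin m)) := by
        intro i hi
        simp only [Finset.mem_filter, Finset.mem_univ, true_and] at hi
        simp only [Finset.mem_singleton]
        by_contra hne
        exact hi (by simp [he, hne])
      simpa using Finset.card_le_card hsub
    · simp [Matrix.mulVec, dotProduct]
  have hS1nn : 0 ≤ sSup S1 := le_csSup bdd1 mem1
  have hS2nn : 0 ≤ sSup S2 := le_csSup bdd2 mem2
  set δ : ℝ := sSup S1 + 2 * sSup S2 with hδ
  -- main: δ is in the RIP set
  apply csInf_le
  · exact ⟨0, fun d hd => hd.1⟩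
  refine ⟨by positivity, fun x z hx hz => ?_⟩
  have gl : l2norm ((hcat A 1).mulVec (Fin.append x z)) ^ 2
      = ∑ i, ‖A.mulVec x i + z i‖^2 := by
    rw [l2sq]; exact Finset.sum_congr rfl fun i _ => by rw [hcat_mulVec]
  rw [gl, l2sq x, l2sq z]
  set X := ∑ i, ‖x i‖^2 with hX
  set Z := ∑ i, ‖z i‖^2 with hZ
  have hX0 : 0 ≤ X := Finset.sum_nonneg fun i _ => by positivity
  have hZ0 : 0 ≤ Z := Finset.sum_nonneg fun i _ => by positivity
  rcases eq_or_lt_of_le (add_nonneg hX0 hZ0) with hE | hE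
  · -- degenerate case
    have hXz : X = 0 := by linarith
    have hsumx : ∑ i, ‖x i‖^2 = 0 := by rw [← hX]; exact hXz
    have hx0 : ∀ j, x j = 0 := fun j => by
      have h := (Finset.sum_eq_zero_iff_of_nonneg
        (fun i _ => sq_nonneg ‖x i‖)).mp hsumx j (Finset.mem_univ j)
      simpa using h
    have hZz : Z = 0 := by linarith
    have hsumz : ∑ i, ‖z i‖^2 = 0 := by rw [← hZ]; exact hZz
    have hz0 : ∀ j, z j = 0 := fun j => by
      have h := (Finset.sum_eq_zero_iff_of_nonneg
        (fun i _ => sq_nonneg ‖z i‖)).mp hsumz j (Finset.mem_univ j)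
      simpa using h
    have hW : ∑ i, ‖A.mulVec x i + z i‖^2 = 0 := by
      apply Finset.sum_eq_zero
      intro i _
      have : A.mulVec x i = 0 := by
        simp [Matrix.mulVec, dotProduct, hx0]
      simp [this, hz0 i]
    rw [hW, ← hE]
    simp
  · -- scaling
    set E := X + Z with hEdef
    set c : ℝ := (Real.sqrt E)⁻¹ with hc
    have hE0 : 0 < E := hE
    have hc0 : 0 < c := inv_pos.mpr (Real.sqrt_pos.mpr hE0)
    have hc2 : c^2 = E⁻¹ := by
      rw [hc, ← Real.sqrt_inv, Real.sq_sqrt (inv_nonneg.mpr hE0.le)]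
    set x' : Fin n → ℂ := (c : ℂ) • x with hx'
    set z' : Fin m → ℂ := (c : ℂ) • z with hz'
    have hnc : ∀ (w : ℂ), ‖(c:ℂ) * w‖^2 = c^2 * ‖w‖^2 := fun w => by
      rw [norm_mul, Complex.norm_real, Real.norm_eq_abs, abs_of_pos hc0, mul_pow]
    have hX' : ∑ i, ‖x' i‖^2 = c^2 * X := by
      simp only [hx', Pi.smul_apply, smul_eq_mul, hnc, hX, Finset.mul_sum]
    have hZ' : ∑ i, ‖z' i‖^2 = c^2 * Z := by
      simp only [hz', Pi.smul_apply, smul_eq_mul, hnc, hZ, Finset.mul_sum]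
    have hunit : (∑ i, ‖x' i‖^2) + ∑ i, ‖z' i‖^2 = 1 := by
      rw [hX', hZ', ← mul_add, hc2, inv_mul_cancel₀ (by linarith)]
    have hAx' : A.mulVec x' = (c : ℂ) • A.mulVec x := by
      rw [hx']; ext i; simp [Matrix.mulVec_smul]
    have hAX' : ∑ i, ‖A.mulVec x' i‖^2 = c^2 * ∑ i, ‖A.mulVec x i‖^2 := by
      rw [hAx']
      simp only [Pi.smul_apply, smul_eq_mul, hnc, Finset.mul_sum]
    -- membership bound 1
    have ha : |(∑ i, ‖A.mulVec x' i‖^2) - ∑ i, ‖x' i‖^2| ≤ sSup S1 := by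
      apply le_csSup bdd1
      refine ⟨x', ?_, sparse_smul _ hx, by rw [l2sq, l2sq]⟩
      have hz'0 : (0:ℝ) ≤ ∑ i, ‖z' i‖^2 := Finset.sum_nonneg fun _ _ => sq_nonneg _
      have hle : l2norm x' ≤ Real.sqrt 1 := Real.sqrt_le_sqrt (by linarith)
      simpa [Real.sqrt_one] using hle
    -- membership bound 2
    have hb : ‖∑ i, star (A.mulVec x' i) * z' i‖ ≤ sSup S2 := by
      apply le_csSup bdd2
      exact ⟨x', z', by rw [l2sq, l2sq]; exact hunit, sparse_smul _ hx, sparse_smul _ hz, rfl⟩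
    -- identity for W'
    set cross : ℂ := ∑ i, star (A.mulVec x' i) * z' i with hcross
    have hid : ∑ i, ‖A.mulVec x' i + z' i‖^2
        = (∑ i, ‖A.mulVec x' i‖^2) + (∑ i, ‖z' i‖^2) + 2 * cross.re := by
      have : ∀ i ∈ Finset.univ, ‖A.mulVec x' i + z' i‖^2
          = ‖A.mulVec x' i‖^2 + ‖z' i‖^2 + 2 * ((starRingEnd ℂ (A.mulVec x' i)) * z' i).re :=
        fun i _ => norm_add_sq_c _ _
      rw [Finset.sum_congr rfl this]
      rw [Finset.sum_add_distrib, Finset.sum_add_distrib]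
      congr 1
      rw [hcross, Complex.re_sum, Finset.mul_sum]
      exact Finset.sum_congr rfl fun i _ => rfl
    have hre : |cross.re| ≤ ‖cross‖ := by
      exact Complex.abs_re_le_norm cross
    -- |W' - 1| ≤ δ
    have hW' : |(∑ i, ‖A.mulVec x' i + z' i‖^2) - 1| ≤ δ := by
      rw [hid, ← hunit]
      have h2 : |(∑ i, ‖A.mulVec x' i‖^2) - ∑ i, ‖x' i‖^2| ≤ sSup S1 := ha
      rw [abs_le] at h2 ⊢
      rw [abs_le] at hre
      constructor <;> nlinarith
    -- scale back
    have hscale : ∑ i, ‖A.mulVec x' i + z' i‖^2 = c^2 * ∑ i, ‖A.mulVec x i + z i‖^2 := by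
      rw [Finset.mul_sum]
      refine Finset.sum_congr rfl fun i _ => ?_
      have hpt : (A.mulVec x') i + z' i = (c:ℂ) * ((A.mulVec x) i + z i) := by
        rw [hAx']; simp [hz', mul_add]
      rw [hpt, hnc]
    rw [hscale, hc2] at hW'
    have hEpos : (0:ℝ) < E := hE
    rw [abs_le] at hW'
    have hW0 : 0 ≤ ∑ i, ‖A.mulVec x i + z i‖^2 :=
      Finset.sum_nonneg fun i _ => by positivity
    constructor
    · have := hW'.1
      have h3 : E * (1 - δ) ≤ E * (E⁻¹ * ∑ i, ‖A.mulVec x i + z i‖^2) :=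
        mul_le_mul_of_nonneg_left (by linarith) (le_of_lt hEpos)
      rw [← mul_assoc, mul_inv_cancel₀ (ne_of_gt hEpos), one_mul] at h3
      linarith [h3]
    · have := hW'.2
      have h3 : E * (E⁻¹ * ∑ i, ‖A.mulVec x i + z i‖^2) ≤ E * (1 + δ) :=
        mul_le_mul_of_nonneg_left (by linarith) (le_of_lt hEpos)
      rw [← mul_assoc, mul_inv_cancel₀ (ne_of_gt hEpos), one_mul] at h3
      linarith [h3]
end

section
/- Let m, ñ, n, k be positive integers, let U ∈ ℂ^{m×ñ}, and let B̃ ∈ ℂ^{ñ×n} satisfy B̃*B̃ = I_n. Then for every x ∈ ℂⁿ and every k-sparse z ∈ ℂᵐ, the vector v = (z* U diag(B̃ x))* ∈ ℂ^ñ satisfies ‖v‖₂ ≤ μ(U) · √k · ‖x‖₂ · ‖z‖₂. -/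
open MeasureTheory ProbabilityTheory Matrix Finset

lemma coh_bound {a b : ℕ} (ha : 0 < a) (hb : 0 < b) (M : Matrix (Fin a) (Fin b) ℂ)
    (i : Fin a) (j : Fin b) : ‖M i j‖ ≤ coh M := by
  have hfin : ({r : ℝ | ∃ i j, r = ‖M i j‖}).Finite := by
    have : {r : ℝ | ∃ i j, r = ‖M i j‖} =
        (fun p : Fin a × Fin b => ‖M p.1 p.2‖) '' Set.univ := by
      ext r; simp [eq_comm, Prod.exists]
    rw [this]; exact (Set.finite_univ).image _
  exact le_csSup hfin.bddAbove ⟨i, j, rfl⟩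

lemma l1_le_sqrt_l2 {n k : ℕ} (z : Fin n → ℂ) (hz : Sparse k z) :
    l1norm z ≤ Real.sqrt k * l2norm z := by
  set T := Finset.univ.filter fun i => z i ≠ 0 with hT
  have h1 : l1norm z = ∑ i ∈ T, ‖z i‖ := by
    rw [l1norm, ← Finset.sum_filter_ne_zero]
    apply Finset.sum_congr
    · ext i; simp [hT, norm_eq_zero]
    · intros; rfl
  have h2 : (∑ i ∈ T, ‖z i‖) ^ 2 ≤ (T.card : ℝ) * ∑ i ∈ T, ‖z i‖ ^ 2 := by
    exact_mod_cast sq_sum_le_card_mul_sum_sq (s := T) (f := fun i => ‖z i‖)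
  have h3 : (∑ i ∈ T, ‖z i‖ ^ 2) ≤ ∑ i, ‖z i‖ ^ 2 :=
    Finset.sum_le_sum_of_subset_of_nonneg (Finset.subset_univ T)
      (fun i _ _ => by positivity)
  have h4 : (T.card : ℝ) ≤ k := by exact_mod_cast hz
  have hnn : (0:ℝ) ≤ ∑ i ∈ T, ‖z i‖ := Finset.sum_nonneg fun i _ => norm_nonneg _
  rw [h1, l2norm]
  have := Real.sqrt_le_sqrt (h2.trans (by
    apply mul_le_mul h4 h3 (Finset.sum_nonneg fun i _ => by positivity) (Nat.cast_nonneg k)))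
  rwa [Real.sqrt_sq hnn, Real.sqrt_mul (Nat.cast_nonneg k)] at this

lemma l2_mulVec_eq {nt n : ℕ} (B : Matrix (Fin nt) (Fin n) ℂ) (hB : Bᴴ * B = 1)
    (x : Fin n → ℂ) : ∑ j, ‖(B.mulVec x) j‖ ^ 2 = ∑ i, ‖x i‖ ^ 2 := by
  have h : star (B.mulVec x) ⬝ᵥ (B.mulVec x) = star x ⬝ᵥ x := by
    rw [Matrix.star_mulVec, Matrix.dotProduct_mulVec, Matrix.vecMul_vecMul, hB,
      Matrix.vecMul_one]
  have h2 : ∀ (w : Fin nt → ℂ), (star w ⬝ᵥ w).re = ∑ j, ‖w j‖ ^ 2 := by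
    intro w
    rw [dotProduct, Complex.re_sum]
    refine Finset.sum_congr rfl fun j _ => ?_
    simp [Pi.star_apply, Complex.mul_re, Complex.star_def,
      Complex.sq_norm, Complex.normSq_apply]
  have h2' : ∀ (w : Fin n → ℂ), (star w ⬝ᵥ w).re = ∑ j, ‖w j‖ ^ 2 := by
    intro w
    rw [dotProduct, Complex.re_sum]
    refine Finset.sum_congr rfl fun j _ => ?_
    simp [Pi.star_apply, Complex.mul_re, Complex.star_def,
      Complex.sq_norm, Complex.normSq_apply]
  rw [← h2, ← h2', h]

/-- norm bound ‖(z* U diag(B̃x))*‖₂ ≤ μ(U)·√k·‖x‖₂·‖z‖₂ for a column-wise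
orthonormal B̃ and k-sparse z (equation (13) of the paper). -/
theorem stmt_9 (m nt n k : ℕ) (hm : 0 < m) (hnt : 0 < nt) (hn : 0 < n) (hk : 0 < k)
    (U : Matrix (Fin m) (Fin nt) ℂ)
    (B : Matrix (Fin nt) (Fin n) ℂ) (hB : Bᴴ * B = 1)
    (x : Fin n → ℂ) (z : Fin m → ℂ) (hz : Sparse k z) :
    l2norm (fun j => star ((∑ i, star (z i) * U i j) * B.mulVec x j)) ≤
      coh U * Real.sqrt k * l2norm x * l2norm z := by
  set μ := coh U with hμ
  have hμ0 : 0 ≤ μ := (norm_nonneg (U ⟨0,hm⟩ ⟨0,hnt⟩)).trans (coh_bound hm hnt U _ _)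
  have hl1 : 0 ≤ l1norm z := Finset.sum_nonneg fun i _ => norm_nonneg _
  have hC : 0 ≤ μ * l1norm z := mul_nonneg hμ0 hl1
  have hbound : ∀ j, ‖(∑ i, star (z i) * U i j)‖ ≤ μ * l1norm z := by
    intro j
    calc ‖∑ i, star (z i) * U i j‖ ≤ ∑ i, ‖star (z i) * U i j‖ := norm_sum_le _ _
      _ ≤ ∑ i, ‖z i‖ * μ := by
          refine Finset.sum_le_sum fun i _ => ?_
          rw [norm_mul, norm_star]
          exact mul_le_mul_of_nonneg_left (coh_bound hm hnt U i j) (norm_nonneg _)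
      _ = μ * l1norm z := by rw [l1norm, ← Finset.sum_mul, mul_comm]
  have key : l2norm (fun j => star ((∑ i, star (z i) * U i j) * B.mulVec x j)) ≤
      (μ * l1norm z) * l2norm x := by
    rw [l2norm, l2norm]
    have h1 : ∑ j, ‖star ((∑ i, star (z i) * U i j) * B.mulVec x j)‖ ^ 2 ≤
        (μ * l1norm z)^2 * ∑ j, ‖B.mulVec x j‖ ^ 2 := by
      rw [Finset.mul_sum]
      refine Finset.sum_le_sum fun j _ => ?_
      rw [norm_star, norm_mul, mul_pow]
      have hb := hbound j
      have hn1 : (0:ℝ) ≤ ‖B.mulVec x j‖ := norm_nonneg _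
      have hn2 : (0:ℝ) ≤ ‖∑ i, star (z i) * U i j‖ := norm_nonneg _
      exact mul_le_mul_of_nonneg_right (pow_le_pow_left₀ hn2 hb 2) (sq_nonneg _)
    have h2 := Real.sqrt_le_sqrt h1
    rwa [Real.sqrt_mul (sq_nonneg _), Real.sqrt_sq hC, l2_mulVec_eq B hB x] at h2
  refine key.trans ?_
  have h := l1_le_sqrt_l2 z hz
  have hx : 0 ≤ l2norm x := Real.sqrt_nonneg _
  calc μ * l1norm z * l2norm x = (μ * l2norm x) * l1norm z := by ring
    _ ≤ (μ * l2norm x) * (Real.sqrt k * l2norm z) :=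
        mul_le_mul_of_nonneg_left h (mul_nonneg hμ0 hx)
    _ = μ * Real.sqrt k * l2norm x * l2norm z := by ring
end

section
/- Let m, ñ, n, k be positive integers, let U ∈ ℂ^{m×ñ}, and let B̃ ∈ ℂ^{ñ×n} satisfy B̃*B̃ = I_n. Then for every k-sparse z ∈ ℂᵐ one has ‖B̃* diag(U* z)‖_{2→2} ≤ μ(U) · √k · ‖z‖₂. -/
open MeasureTheory ProbabilityTheory Matrix Finset

/-- The spectral (ℓ₂ → ℓ₂ operator) norm of a matrix. -/
noncomputable def opNorm {a b : ℕ} (M : Matrix (Fin a) (Fin b) ℂ) : ℝ :=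
  sSup {r : ℝ | ∃ x : Fin b → ℂ, l2norm x ≤ 1 ∧ r = l2norm (M.mulVec x)}


lemma l2norm_nonneg' {n : ℕ} (x : Fin n → ℂ) : 0 ≤ l2norm x := Real.sqrt_nonneg _

/-- Cauchy–Schwarz in sqrt form for nonneg functions. -/
lemma CSsqrt {ι : Type*} (s : Finset ι) (f g : ι → ℝ) (hf : ∀ i, 0 ≤ f i) (hg : ∀ i, 0 ≤ g i) :
    ∑ i ∈ s, f i * g i ≤ Real.sqrt (∑ i ∈ s, f i ^ 2) * Real.sqrt (∑ i ∈ s, g i ^ 2) := by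
  have h := sum_mul_sq_le_sq_mul_sq s f g
  have h0 : 0 ≤ ∑ i ∈ s, f i * g i := Finset.sum_nonneg fun i _ => mul_nonneg (hf i) (hg i)
  calc ∑ i ∈ s, f i * g i = Real.sqrt ((∑ i ∈ s, f i * g i) ^ 2) := (Real.sqrt_sq h0).symm
    _ ≤ Real.sqrt ((∑ i ∈ s, f i ^ 2) * ∑ i ∈ s, g i ^ 2) := Real.sqrt_le_sqrt h
    _ = _ := Real.sqrt_mul (Finset.sum_nonneg fun i _ => sq_nonneg _) _

lemma star_dot_self {n : ℕ} (u : Fin n → ℂ) : star u ⬝ᵥ u = ((∑ j, ‖u j‖ ^ 2 : ℝ) : ℂ) := by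
  simp only [dotProduct, Pi.star_apply]
  push_cast
  refine Finset.sum_congr rfl fun j _ => ?_
  rw [Complex.star_def, ← Complex.normSq_eq_conj_mul_self, Complex.normSq_eq_norm_sq]
  norm_num

lemma iso_bound {nt n : ℕ} (B : Matrix (Fin nt) (Fin n) ℂ) (hB : Bᴴ * B = 1)
    (v : Fin nt → ℂ) : l2norm (Bᴴ.mulVec v) ≤ l2norm v := by
  set P := B * Bᴴ with hPdef
  have hPH : Pᴴ = P := by simp [hPdef, Matrix.conjTranspose_mul]
  have hPP : P * P = P := by
    rw [hPdef]; rw [Matrix.mul_assoc, ← Matrix.mul_assoc Bᴴ B Bᴴ, hB, Matrix.one_mul]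
  set u := Bᴴ.mulVec v
  set p := P.mulVec v with hp
  have h1 : star u ⬝ᵥ u = star v ⬝ᵥ p := by
    rw [show star u = star v ᵥ* B from by
      simpa using Matrix.star_mulVec Bᴴ v]
    rw [← Matrix.dotProduct_mulVec, hp, ← hPdef.symm]
    rw [show B *ᵥ u = P *ᵥ v from by rw [show u = Bᴴ *ᵥ v from rfl, Matrix.mulVec_mulVec]]
  have h2 : star p ⬝ᵥ p = star v ⬝ᵥ p := by
    rw [show star p = star v ᵥ* P from by
      simpa [hPH] using Matrix.star_mulVec P v]
    rw [← Matrix.dotProduct_mulVec, hp, Matrix.mulVec_mulVec, hPP]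
  have hu : ((∑ j, ‖u j‖ ^ 2 : ℝ) : ℂ) = ((∑ j, ‖p j‖ ^ 2 : ℝ) : ℂ) := by
    rw [← star_dot_self, ← star_dot_self, h1, h2]
  have hup : (∑ j, ‖u j‖ ^ 2 : ℝ) = ∑ j, ‖p j‖ ^ 2 := by exact_mod_cast hu
  have hcs : (∑ j, ‖p j‖ ^ 2 : ℝ) ≤ l2norm v * Real.sqrt (∑ j, ‖p j‖ ^ 2) := by
    have h3 : (∑ j, ‖p j‖ ^ 2 : ℝ) = ‖star v ⬝ᵥ p‖ := by
      rw [← h2, star_dot_self]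
      rw [Complex.norm_real, Real.norm_eq_abs, abs_of_nonneg (Finset.sum_nonneg fun j _ => sq_nonneg _)]
    calc (∑ j, ‖p j‖ ^ 2 : ℝ) = ‖star v ⬝ᵥ p‖ := h3
      _ ≤ ∑ j, ‖v j‖ * ‖p j‖ := by
          refine le_trans (norm_sum_le _ _) (Finset.sum_le_sum fun j _ => le_of_eq ?_)
          simp [Pi.star_apply, Complex.norm_conj]
      _ ≤ Real.sqrt (∑ j, ‖v j‖ ^ 2) * Real.sqrt (∑ j, ‖p j‖ ^ 2) :=
          CSsqrt _ _ _ (fun _ => norm_nonneg _) (fun _ => norm_nonneg _)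
      _ = l2norm v * Real.sqrt (∑ j, ‖p j‖ ^ 2) := rfl
  have hple : Real.sqrt (∑ j, ‖p j‖ ^ 2) ≤ l2norm v := by
    rcases eq_or_lt_of_le (Finset.sum_nonneg fun j (_ : j ∈ univ) => sq_nonneg ‖p j‖) with h | h
    · rw [← h]; simpa using l2norm_nonneg' v
    · have hs : 0 < Real.sqrt (∑ j, ‖p j‖ ^ 2) := Real.sqrt_pos.mpr h
      nlinarith [Real.sq_sqrt (le_of_lt h)]
  calc l2norm u = Real.sqrt (∑ j, ‖p j‖ ^ 2) := by rw [l2norm, hup]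
    _ ≤ l2norm v := hple

lemma coh_set_eq {a b : ℕ} (M : Matrix (Fin a) (Fin b) ℂ) :
    {r : ℝ | ∃ i j, r = ‖M i j‖} = Set.range (fun p : Fin a × Fin b => ‖M p.1 p.2‖) := by
  ext r; constructor
  · rintro ⟨i, j, rfl⟩; exact ⟨(i, j), rfl⟩
  · rintro ⟨⟨i, j⟩, rfl⟩; exact ⟨i, j, rfl⟩

lemma coh_ge {a b : ℕ} (M : Matrix (Fin a) (Fin b) ℂ) (i : Fin a) (j : Fin b) :
    ‖M i j‖ ≤ coh M := by
  apply le_csSup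
  · rw [coh_set_eq]; exact (Set.finite_range _).bddAbove
  · exact ⟨i, j, rfl⟩

lemma coh_nonneg {a b : ℕ} (ha : 0 < a) (hb : 0 < b) (M : Matrix (Fin a) (Fin b) ℂ) :
    0 ≤ coh M :=
  le_trans (norm_nonneg _) (coh_ge M ⟨0, ha⟩ ⟨0, hb⟩)

lemma entry_bound {m nt k : ℕ} (hm : 0 < m) (hnt : 0 < nt) (U : Matrix (Fin m) (Fin nt) ℂ)
    (z : Fin m → ℂ) (hz : Sparse k z)
    (j : Fin nt) : ‖(Uᴴ.mulVec z) j‖ ≤ coh U * Real.sqrt k * l2norm z := by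
  set S := Finset.univ.filter fun i => z i ≠ 0 with hS
  calc ‖(Uᴴ.mulVec z) j‖ ≤ ∑ i ∈ S, ‖U i j‖ * ‖z i‖ := by
        rw [Matrix.mulVec, dotProduct,
          ← Finset.sum_subset (Finset.subset_univ S) (fun i _ hi => by
            simp only [hS, Finset.mem_filter, Finset.mem_univ, true_and, not_not] at hi
            simp [hi])]
        refine le_trans (norm_sum_le _ _) (Finset.sum_le_sum fun i _ => le_of_eq ?_)
        simp [Matrix.conjTranspose_apply]
    _ ≤ ∑ i ∈ S, coh U * ‖z i‖ :=
        Finset.sum_le_sum fun i _ => mul_le_mul_of_nonneg_right (coh_ge U i j) (norm_nonneg _)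
    _ = coh U * ∑ i ∈ S, 1 * ‖z i‖ := by rw [Finset.mul_sum]; simp
    _ ≤ coh U * (Real.sqrt (∑ i ∈ S, (1:ℝ) ^ 2) * Real.sqrt (∑ i ∈ S, ‖z i‖ ^ 2)) := by
        refine mul_le_mul_of_nonneg_left ?_ (coh_nonneg hm hnt U)
        exact CSsqrt S _ _ (fun _ => zero_le_one) (fun _ => norm_nonneg _)
    _ ≤ coh U * (Real.sqrt k * l2norm z) := by
        refine mul_le_mul_of_nonneg_left (mul_le_mul ?_ ?_ (Real.sqrt_nonneg _)
          (Real.sqrt_nonneg _)) (coh_nonneg hm hnt U)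
        · apply Real.sqrt_le_sqrt
          simpa using (Nat.cast_le.mpr hz : (S.card : ℝ) ≤ k)
        · exact Real.sqrt_le_sqrt (Finset.sum_le_sum_of_subset_of_nonneg (Finset.subset_univ S)
            fun i _ _ => sq_nonneg _)
    _ = coh U * Real.sqrt k * l2norm z := by ring

/-- seminorm bound ‖B̃* diag(U*z)‖_{2→2} ≤ μ(U)·√k·‖z‖₂ for k-sparse z
(equation (14) of the paper). -/
theorem stmt_11 (m nt n k : ℕ) (hm : 0 < m) (hnt : 0 < nt) (hn : 0 < n) (hk : 0 < k)
    (U : Matrix (Fin m) (Fin nt) ℂ)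
    (B : Matrix (Fin nt) (Fin n) ℂ) (hB : Bᴴ * B = 1)
    (z : Fin m → ℂ) (hz : Sparse k z) :
    opNorm (Bᴴ * Matrix.diagonal (Uᴴ.mulVec z)) ≤ coh U * Real.sqrt k * l2norm z := by
  set C := coh U * Real.sqrt k * l2norm z with hC
  have hC0 : 0 ≤ C :=
    mul_nonneg (mul_nonneg (coh_nonneg hm hnt U) (Real.sqrt_nonneg _)) (l2norm_nonneg' z)
  apply Real.sSup_le _ hC0
  rintro r ⟨x, hx, rfl⟩
  set w := Uᴴ.mulVec z with hw
  rw [← Matrix.mulVec_mulVec]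
  refine le_trans (iso_bound B hB _) ?_
  have hstep : ∀ jj : Fin nt, ‖(Matrix.diagonal w *ᵥ x) jj‖ ^ 2 ≤ C ^ 2 * ‖x jj‖ ^ 2 := by
    intro jj
    rw [Matrix.mulVec_diagonal, norm_mul, mul_pow]
    exact mul_le_mul_of_nonneg_right
      (pow_le_pow_left₀ (norm_nonneg _) (entry_bound hm hnt U z hz jj) 2) (sq_nonneg _)
  calc l2norm (Matrix.diagonal w *ᵥ x)
      = Real.sqrt (∑ jj, ‖(Matrix.diagonal w *ᵥ x) jj‖ ^ 2) := rfl
    _ ≤ Real.sqrt (C ^ 2 * ∑ jj, ‖x jj‖ ^ 2) := Real.sqrt_le_sqrt (by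
        rw [Finset.mul_sum]; exact Finset.sum_le_sum fun jj _ => hstep jj)
    _ = C * l2norm x := by
        rw [Real.sqrt_mul (sq_nonneg C), Real.sqrt_sq hC0]; rfl
    _ ≤ C * 1 := mul_le_mul_of_nonneg_left hx hC0
    _ = C := mul_one C
end
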